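/- For any real α > 1, the infimum over k ∈ [0,1] of 4k^{α+2} + (1+k)^{α+1}(α - 2k) is strictly positive. -/
import Mathlib

open Set

-- key one-variable inequality: for 1 ≤ r < 2, 0 < β < 1, (1+r)^(β+2) * ((2-r) - β*r) < 4
lemma key1 (r β : ℝ) (hr1 : 1 ≤ r) (hr2 : r < 2) (hβ0 : 0 < β) (hβ1 : β < 1) :
    (1 + r) ^ (β + 2) * ((2 - r) - β * r) < 4 := by
  have hrpos : (0:ℝ) < r := lt_of_lt_of_le one_pos hr1
  have h1r : (0:ℝ) < 1 + r := by linarith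
  set A := (1 + r) ^ β with hA
  have hA1 : 1 < A := by
    rw [hA]
    rw [Real.one_lt_rpow_iff_of_pos h1r]
    left; exact ⟨by linarith, hβ0⟩
  have hA2 : A < 1 + β * r :=
    rpow_one_add_lt_one_add_mul_self (by linarith) (by positivity) hβ0 hβ1
  have hsplit : (1 + r) ^ (β + 2) = A * (1 + r) ^ (2:ℝ) := by
    rw [hA, ← Real.rpow_add h1r]
  have hsq : (1 + r) ^ (2:ℝ) = (1 + r) ^ (2:ℕ) := by
    rw [← Real.rpow_natCast (1 + r) 2]; norm_num
  rw [hsplit, hsq]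
  -- key: A * ((2-r) - β*r) < 2 - r, since (2-r)(A-1) ≤ (2-r)βr < βrA
  have key : A * ((2 - r) - β * r) < 2 - r := by
    nlinarith [mul_pos hβ0 hrpos, mul_nonneg (sub_nonneg.2 hr2.le) (sub_nonneg.2 hA1.le)]
  nlinarith [sq_nonneg (r - 1), sq_nonneg (1 + r), mul_pos hβ0 hrpos]

lemma pointwise (α : ℝ) (hα : 1 < α) (k : ℝ) (hk : k ∈ Set.Icc (0:ℝ) 1) :
    0 < 4 * k ^ (α + 2) + (1 + k) ^ (α + 1) * (α - 2 * k) := by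
  obtain ⟨hk0, hk1⟩ := hk
  have h1k : (0:ℝ) < 1 + k := by linarith
  rcases lt_or_ge α (2 * k) with hc | hc
  · -- hard case: k > α/2 > 1/2, α < 2
    have hkpos : (0:ℝ) < k := by nlinarith
    have hα2 : α < 2 := by nlinarith
    set r := 1 / k with hr
    have hr1 : 1 ≤ r := by rw [hr]; rw [le_div_iff₀ hkpos]; linarith
    have hr2 : r < 2 := by rw [hr, div_lt_iff₀ hkpos]; nlinarith
    have hkey := key1 r (α - 1) hr1 hr2 (by linarith) (by linarith)
    have e1 : (α - 1) + 2 = α + 1 := by ring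
    rw [e1] at hkey
    have e2 : (2 - r) - (α - 1) * r = 2 - α * r := by ring
    rw [e2] at hkey
    -- multiply by k^(α+2) > 0
    have hkp : (0:ℝ) < k ^ (α + 2) := Real.rpow_pos_of_pos hkpos _
    have hkp1 : (0:ℝ) < k ^ (α + 1) := Real.rpow_pos_of_pos hkpos _
    have hmul := mul_lt_mul_of_pos_left hkey hkp
    -- rewrite LHS: k^(α+2) * ((1+r)^(α+1) * (2 - α*r)) = (1+k)^(α+1) * (2k - α)
    have hrw : k ^ (α + 2) * ((1 + r) ^ (α + 1) * (2 - α * r))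
        = (1 + k) ^ (α + 1) * (2 * k - α) := by
      have h1 : k ^ (α + 2) = k ^ (α + 1) * k := by
        rw [← Real.rpow_add_one hkpos.ne' (α+1)]; ring_nf
      have h2 : k ^ (α + 1) * (1 + r) ^ (α + 1) = (1 + k) ^ (α + 1) := by
        rw [← Real.mul_rpow hk0 (by positivity)]
        congr 1
        rw [hr]
        field_simp
        ring
      have h3 : k * (2 - α * r) = 2 * k - α := by
        rw [hr]; field_simp
      calc k ^ (α + 2) * ((1 + r) ^ (α + 1) * (2 - α * r))
          = (k ^ (α + 1) * (1 + r) ^ (α + 1)) * (k * (2 - α * r)) := by rw [h1]; ring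
        _ = (1 + k) ^ (α + 1) * (2 * k - α) := by rw [h2, h3]
    rw [hrw] at hmul
    nlinarith
  · -- easy case: α - 2k ≥ 0
    have hkn : (0:ℝ) ≤ k ^ (α + 2) := Real.rpow_nonneg hk0 _
    have h1kp : (0:ℝ) < (1 + k) ^ (α + 1) := Real.rpow_pos_of_pos h1k _
    rcases lt_or_eq_of_le hc with h | h
    · nlinarith
    · have hkpos : (0:ℝ) < k := by nlinarith
      have : (0:ℝ) < k ^ (α + 2) := Real.rpow_pos_of_pos hkpos _
      nlinarith

theorem stmt_0 (α : ℝ) (hα : 1 < α) :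
    0 < sInf ((fun k : ℝ => 4 * k ^ (α + 2) + (1 + k) ^ (α + 1) * (α - 2 * k)) ''
      Set.Icc (0 : ℝ) 1) := by
  have hcont : ContinuousOn (fun k : ℝ => 4 * k ^ (α + 2) + (1 + k) ^ (α + 1) * (α - 2 * k))
      (Set.Icc (0:ℝ) 1) := by
    apply ContinuousOn.add
    · exact (continuousOn_const.mul ((continuousOn_id.rpow_const (fun x _ => Or.inr (by linarith)))))
    · exact ((continuousOn_const.add continuousOn_id).rpow_const
        (fun x _ => Or.inr (by linarith))).mul (by fun_prop)
  have hcomp : IsCompact ((fun k : ℝ => 4 * k ^ (α + 2) + (1 + k) ^ (α + 1) * (α - 2 * k)) ''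
      Set.Icc (0 : ℝ) 1) := (isCompact_Icc).image_of_continuousOn hcont
  have hne : ((fun k : ℝ => 4 * k ^ (α + 2) + (1 + k) ^ (α + 1) * (α - 2 * k)) ''
      Set.Icc (0 : ℝ) 1).Nonempty := (Set.nonempty_Icc.2 zero_le_one).image _
  obtain ⟨k, hk, hke⟩ := hcomp.sInf_mem hne
  rw [← hke]
  exact pointwise α hα k hk
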